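/- Let α, β, γ, δ ∈ (0, π) be elliptic (α ± β ± γ ± δ ∉ 2πℤ for all sign choices), set σ = (α+β+γ+δ)/2, ᾱ = σ−α, etc., and M = (sin α sin β sin γ sin δ)/(sin ᾱ sin β̄ sin γ̄ sin δ̄). If M > 0, then ᾱ, β̄, γ̄, δ̄ all lie in the open interval (0, π). -/
import Mathlib


open Real

def Elliptic (α β γ δ : ℝ) : Prop :=
  ∀ e₁ e₂ e₃ : ℝ, (e₁ = 1 ∨ e₁ = -1) → (e₂ = 1 ∨ e₂ = -1) → (e₃ = 1 ∨ e₃ = -1) →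
    ∀ n : ℤ, α + e₁ * β + e₂ * γ + e₃ * δ ≠ 2 * Real.pi * n

private lemma not_both_outside (α β γ δ : ℝ)
    (hα : α ∈ Set.Ioo 0 Real.pi) (hβ : β ∈ Set.Ioo 0 Real.pi)
    (hγ : γ ∈ Set.Ioo 0 Real.pi) (hδ : δ ∈ Set.Ioo 0 Real.pi)
    (ha : (β + γ + δ - α) / 2 < 0 ∨ Real.pi < (β + γ + δ - α) / 2)
    (hb : (α + γ + δ - β) / 2 < 0 ∨ Real.pi < (α + γ + δ - β) / 2) : False := by
  obtain ⟨hα1, hα2⟩ := hα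
  obtain ⟨hβ1, hβ2⟩ := hβ
  obtain ⟨hγ1, hγ2⟩ := hγ
  obtain ⟨hδ1, hδ2⟩ := hδ
  rcases ha with ha | ha <;> rcases hb with hb | hb <;> linarith

private lemma one_angle (α β γ δ : ℝ)
    (hα : α ∈ Set.Ioo 0 Real.pi) (hβ : β ∈ Set.Ioo 0 Real.pi)
    (hγ : γ ∈ Set.Ioo 0 Real.pi) (hδ : δ ∈ Set.Ioo 0 Real.pi)
    (ha0 : (β + γ + δ - α) / 2 ≠ 0) (haπ : (β + γ + δ - α) / 2 ≠ Real.pi)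
    (hb0 : (α + γ + δ - β) / 2 ≠ 0) (hbπ : (α + γ + δ - β) / 2 ≠ Real.pi)
    (hc0 : (α + β + δ - γ) / 2 ≠ 0) (hcπ : (α + β + δ - γ) / 2 ≠ Real.pi)
    (hd0 : (α + β + γ - δ) / 2 ≠ 0) (hdπ : (α + β + γ - δ) / 2 ≠ Real.pi)
    (hden : 0 < Real.sin ((β + γ + δ - α) / 2) * Real.sin ((α + γ + δ - β) / 2) *
        Real.sin ((α + β + δ - γ) / 2) * Real.sin ((α + β + γ - δ) / 2)) :
    (β + γ + δ - α) / 2 ∈ Set.Ioo 0 Real.pi := by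
  obtain ⟨hα1, hα2⟩ := hα
  obtain ⟨hβ1, hβ2⟩ := hβ
  obtain ⟨hγ1, hγ2⟩ := hγ
  obtain ⟨hδ1, hδ2⟩ := hδ
  set a := (β + γ + δ - α) / 2 with hadef
  set b := (α + γ + δ - β) / 2 with hbdef
  set c := (α + β + δ - γ) / 2 with hcdef
  set d := (α + β + γ - δ) / 2 with hddef
  by_contra hcon
  -- a is outside (0, π)
  have haout : a < 0 ∨ Real.pi < a := by
    rcases lt_trichotomy a 0 with h | h | h
    · exact Or.inl h
    · exact absurd h ha0
    rcases lt_trichotomy a Real.pi with h' | h' | h'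
    · exact absurd ⟨h, h'⟩ hcon
    · exact absurd h' haπ
    · exact Or.inr h'
  -- sin a < 0
  have hsina : Real.sin a < 0 := by
    rcases haout with h | h
    · exact Real.sin_neg_of_neg_of_neg_pi_lt h (by simp only [hadef]; linarith [Real.pi_pos])
    · have h2 : a - 2 * Real.pi < 0 := by simp only [hadef]; linarith
      have h3 : -Real.pi < a - 2 * Real.pi := by linarith
      have := Real.sin_neg_of_neg_of_neg_pi_lt h2 h3
      rwa [Real.sin_sub_two_pi] at this
  -- b, c, d must be inside (0, π)
  have hbin : b ∈ Set.Ioo 0 Real.pi := by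
    by_contra hb
    refine not_both_outside α β γ δ ⟨hα1, hα2⟩ ⟨hβ1, hβ2⟩ ⟨hγ1, hγ2⟩ ⟨hδ1, hδ2⟩ haout ?_
    rcases lt_trichotomy b 0 with h | h | h
    · exact Or.inl h
    · exact absurd h hb0
    rcases lt_trichotomy b Real.pi with h' | h' | h'
    · exact absurd ⟨h, h'⟩ hb
    · exact absurd h' hbπ
    · exact Or.inr h'
  have hcin : c ∈ Set.Ioo 0 Real.pi := by
    by_contra hc
    refine not_both_outside α γ β δ ⟨hα1, hα2⟩ ⟨hγ1, hγ2⟩ ⟨hβ1, hβ2⟩ ⟨hδ1, hδ2⟩ ?_ ?_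
    · rcases haout with h | h
      · exact Or.inl (by simp only [hadef] at h; linarith)
      · exact Or.inr (by simp only [hadef] at h; linarith)
    rcases lt_trichotomy c 0 with h | h | h
    · exact Or.inl (by simp only [hcdef] at h; linarith)
    · exact absurd h hc0
    rcases lt_trichotomy c Real.pi with h' | h' | h'
    · exact absurd ⟨h, h'⟩ hc
    · exact absurd h' hcπ
    · exact Or.inr (by simp only [hcdef] at h'; linarith)
  have hdin : d ∈ Set.Ioo 0 Real.pi := by
    by_contra hd
    refine not_both_outside α δ β γ ⟨hα1, hα2⟩ ⟨hδ1, hδ2⟩ ⟨hβ1, hβ2⟩ ⟨hγ1, hγ2⟩ ?_ ?_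
    · rcases haout with h | h
      · exact Or.inl (by simp only [hadef] at h; linarith)
      · exact Or.inr (by simp only [hadef] at h; linarith)
    rcases lt_trichotomy d 0 with h | h | h
    · exact Or.inl (by simp only [hddef] at h; linarith)
    · exact absurd h hd0
    rcases lt_trichotomy d Real.pi with h' | h' | h'
    · exact absurd ⟨h, h'⟩ hd
    · exact absurd h' hdπ
    · exact Or.inr (by simp only [hddef] at h'; linarith)
  have hsb : 0 < Real.sin b := Real.sin_pos_of_pos_of_lt_pi hbin.1 hbin.2
  have hsc : 0 < Real.sin c := Real.sin_pos_of_pos_of_lt_pi hcin.1 hcin.2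
  have hsd : 0 < Real.sin d := Real.sin_pos_of_pos_of_lt_pi hdin.1 hdin.2
  nlinarith [mul_pos (mul_pos hsb hsc) hsd]

theorem barred_angles_in_Ioo (α β γ δ : ℝ)
    (hα : α ∈ Set.Ioo 0 Real.pi) (hβ : β ∈ Set.Ioo 0 Real.pi)
    (hγ : γ ∈ Set.Ioo 0 Real.pi) (hδ : δ ∈ Set.Ioo 0 Real.pi)
    (hell : Elliptic α β γ δ)
    (σ : ℝ) (hσ : σ = (α + β + γ + δ) / 2)
    (hM : (Real.sin α * Real.sin β * Real.sin γ * Real.sin δ) /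
        (Real.sin (σ - α) * Real.sin (σ - β) * Real.sin (σ - γ) * Real.sin (σ - δ)) > 0) :
    σ - α ∈ Set.Ioo 0 Real.pi ∧ σ - β ∈ Set.Ioo 0 Real.pi ∧
    σ - γ ∈ Set.Ioo 0 Real.pi ∧ σ - δ ∈ Set.Ioo 0 Real.pi := by
  have hea : σ - α = (β + γ + δ - α) / 2 := by rw [hσ]; ring
  have heb : σ - β = (α + γ + δ - β) / 2 := by rw [hσ]; ring
  have hec : σ - γ = (α + β + δ - γ) / 2 := by rw [hσ]; ring
  have hed : σ - δ = (α + β + γ - δ) / 2 := by rw [hσ]; ring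
  -- nonzero / non-π conditions from ellipticity
  have ha0 : (β + γ + δ - α) / 2 ≠ 0 := by
    intro h
    exact hell (-1) (-1) (-1) (Or.inr rfl) (Or.inr rfl) (Or.inr rfl) 0 (by push_cast; linarith)
  have haπ : (β + γ + δ - α) / 2 ≠ Real.pi := by
    intro h
    exact hell (-1) (-1) (-1) (Or.inr rfl) (Or.inr rfl) (Or.inr rfl) (-1) (by push_cast; linarith)
  have hb0 : (α + γ + δ - β) / 2 ≠ 0 := by
    intro h
    exact hell (-1) 1 1 (Or.inr rfl) (Or.inl rfl) (Or.inl rfl) 0 (by push_cast; linarith)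
  have hbπ : (α + γ + δ - β) / 2 ≠ Real.pi := by
    intro h
    exact hell (-1) 1 1 (Or.inr rfl) (Or.inl rfl) (Or.inl rfl) 1 (by push_cast; linarith)
  have hc0 : (α + β + δ - γ) / 2 ≠ 0 := by
    intro h
    exact hell 1 (-1) 1 (Or.inl rfl) (Or.inr rfl) (Or.inl rfl) 0 (by push_cast; linarith)
  have hcπ : (α + β + δ - γ) / 2 ≠ Real.pi := by
    intro h
    exact hell 1 (-1) 1 (Or.inl rfl) (Or.inr rfl) (Or.inl rfl) 1 (by push_cast; linarith)
  have hd0 : (α + β + γ - δ) / 2 ≠ 0 := by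
    intro h
    exact hell 1 1 (-1) (Or.inl rfl) (Or.inl rfl) (Or.inr rfl) 0 (by push_cast; linarith)
  have hdπ : (α + β + γ - δ) / 2 ≠ Real.pi := by
    intro h
    exact hell 1 1 (-1) (Or.inl rfl) (Or.inl rfl) (Or.inr rfl) 1 (by push_cast; linarith)
  -- numerator is positive, hence denominator is positive
  have hnum : 0 < Real.sin α * Real.sin β * Real.sin γ * Real.sin δ :=
    mul_pos (mul_pos (mul_pos (Real.sin_pos_of_pos_of_lt_pi hα.1 hα.2)
      (Real.sin_pos_of_pos_of_lt_pi hβ.1 hβ.2)) (Real.sin_pos_of_pos_of_lt_pi hγ.1 hγ.2))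
      (Real.sin_pos_of_pos_of_lt_pi hδ.1 hδ.2)
  have hden : 0 < Real.sin ((β + γ + δ - α) / 2) * Real.sin ((α + γ + δ - β) / 2) *
      Real.sin ((α + β + δ - γ) / 2) * Real.sin ((α + β + γ - δ) / 2) := by
    rw [← hea, ← heb, ← hec, ← hed]
    rcases div_pos_iff.mp hM with ⟨_, h⟩ | ⟨h, _⟩
    · exact h
    · linarith
  rw [hea, heb, hec, hed]
  refine ⟨one_angle α β γ δ hα hβ hγ hδ ha0 haπ hb0 hbπ hc0 hcπ hd0 hdπ hden, ?_, ?_, ?_⟩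
  · exact one_angle β α γ δ hβ hα hγ hδ hb0 hbπ ha0 haπ
      (fun h => hc0 (by linarith)) (fun h => hcπ (by linarith))
      (fun h => hd0 (by linarith)) (fun h => hdπ (by linarith))
      (by have e : Real.sin ((α + γ + δ - β) / 2) * Real.sin ((β + γ + δ - α) / 2) *
            Real.sin ((β + α + δ - γ) / 2) * Real.sin ((β + α + γ - δ) / 2) =
            Real.sin ((β + γ + δ - α) / 2) * Real.sin ((α + γ + δ - β) / 2) *
            Real.sin ((α + β + δ - γ) / 2) * Real.sin ((α + β + γ - δ) / 2) := by
              rw [show β + α + δ - γ = α + β + δ - γ from by ring,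
                  show β + α + γ - δ = α + β + γ - δ from by ring]; ring
          rw [e]; exact hden)
  · have h := one_angle γ β α δ hγ hβ hα hδ
      (fun h => hc0 (by linarith)) (fun h => hcπ (by linarith))
      (fun h => hb0 (by linarith)) (fun h => hbπ (by linarith))
      (fun h => ha0 (by linarith)) (fun h => haπ (by linarith))
      (fun h => hd0 (by linarith)) (fun h => hdπ (by linarith))
      (by have e : Real.sin ((β + α + δ - γ) / 2) * Real.sin ((γ + α + δ - β) / 2) *
            Real.sin ((γ + β + δ - α) / 2) * Real.sin ((γ + β + α - δ) / 2) =
            Real.sin ((β + γ + δ - α) / 2) * Real.sin ((α + γ + δ - β) / 2) *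
            Real.sin ((α + β + δ - γ) / 2) * Real.sin ((α + β + γ - δ) / 2) := by
              rw [show β + α + δ - γ = α + β + δ - γ from by ring,
                  show γ + α + δ - β = α + γ + δ - β from by ring,
                  show γ + β + δ - α = β + γ + δ - α from by ring,
                  show γ + β + α - δ = α + β + γ - δ from by ring]; ring
          rw [e]; exact hden)
    rwa [show α + β + δ - γ = β + α + δ - γ from by ring]
  · have h := one_angle δ β γ α hδ hβ hγ hα
      (fun h => hd0 (by linarith)) (fun h => hdπ (by linarith))
      (fun h => hb0 (by linarith)) (fun h => hbπ (by linarith))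
      (fun h => hc0 (by linarith)) (fun h => hcπ (by linarith))
      (fun h => ha0 (by linarith)) (fun h => haπ (by linarith))
      (by have e : Real.sin ((β + γ + α - δ) / 2) * Real.sin ((δ + γ + α - β) / 2) *
            Real.sin ((δ + β + α - γ) / 2) * Real.sin ((δ + β + γ - α) / 2) =
            Real.sin ((β + γ + δ - α) / 2) * Real.sin ((α + γ + δ - β) / 2) *
            Real.sin ((α + β + δ - γ) / 2) * Real.sin ((α + β + γ - δ) / 2) := by
              rw [show β + γ + α - δ = α + β + γ - δ from by ring,
                  show δ + γ + α - β = α + γ + δ - β from by ring,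
                  show δ + β + α - γ = α + β + δ - γ from by ring,
                  show δ + β + γ - α = β + γ + δ - α from by ring]; ring
          rw [e]; exact hden)
    rwa [show α + β + γ - δ = β + γ + α - δ from by ring]
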